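/- There exists an optimal contract; that is, some implementable contract (s,p) satisfies Π_0(s,p) ≥ Π_0(s′,p′) for every implementable contract (s′,p′). -/

import Mathlib

open Set Filter

/-- Principal's continuation value `Π_t(s,p) = Σ_{τ=t}^∞ δ^{τ−t}(π(s_τ) − p_τ)`. -/
noncomputable def PiVal (δ : ℝ) (π : ℝ → ℝ) (s p : ℕ → ℝ) (t : ℕ) : ℝ :=
  ∑' k : ℕ, δ ^ k * (π (s (t + k)) - p (t + k))

/-- Expert's continuation value `W_t(s,p) = Σ_{τ=t}^∞ δ^{τ−t}(w(s_τ) + p_τ)`. -/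
noncomputable def WVal (δ : ℝ) (w : ℝ → ℝ) (s p : ℕ → ℝ) (t : ℕ) : ℝ :=
  ∑' k : ℕ, δ ^ k * (w (s (t + k)) + p (t + k))

/-- A contract: `s` takes values in `[0,1]`, `s 0 = 0`, and `t ↦ δ^t·p_t` is summable. -/
def IsContract (δ : ℝ) (s p : ℕ → ℝ) : Prop :=
  (∀ t, s t ∈ Set.Icc (0 : ℝ) 1) ∧ s 0 = 0 ∧ Summable fun t => δ ^ t * p t

/-- Implementability: feasibility (monotone `s`, nonnegative `p`) plus (P-IC) and (E-IC). -/
def Implementable (δ : ℝ) (π w : ℝ → ℝ) (s p : ℕ → ℝ) : Prop :=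
  IsContract δ s p ∧ Monotone s ∧ (∀ t, 0 ≤ p t) ∧
  (∀ t, π (s t) / (1 - δ) ≤ PiVal δ π s p t) ∧
  (∀ t, w (s t) / (1 - δ) ≤ WVal δ w s p (t + 1))

/-- An optimal contract maximizes the principal's time-0 profit among implementable contracts. -/
def Optimal (δ : ℝ) (π w : ℝ → ℝ) (s p : ℕ → ℝ) : Prop :=
  Implementable δ π w s p ∧
  ∀ s' p' : ℕ → ℝ, Implementable δ π w s' p' → PiVal δ π s' p' 0 ≤ PiVal δ π s p 0

lemma tsum_geom_mul (δ c : ℝ) (h0 : 0 ≤ δ) (h1 : δ < 1) :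
    ∑' k : ℕ, δ ^ k * c = c / (1 - δ) := by
  rw [tsum_mul_right, tsum_geometric_of_lt_one h0 h1, inv_mul_eq_div]

lemma summable_geom_bound (δ : ℝ) (h0 : 0 ≤ δ) (h1 : δ < 1) (a : ℕ → ℝ) (B : ℝ)
    (hB : ∀ k, |a k| ≤ B) : Summable (fun k => δ ^ k * a k) := by
  refine Summable.of_norm_bounded
    ((summable_geometric_of_lt_one h0 h1).mul_right B) (fun k => ?_)
  rw [Real.norm_eq_abs, abs_mul, abs_pow, abs_of_nonneg h0]
  exact mul_le_mul_of_nonneg_left (hB k) (pow_nonneg h0 k)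

lemma cont_series (δ : ℝ) (h0 : 0 ≤ δ) (h1 : δ < 1) (f : ℝ × ℝ → ℝ) (hf : Continuous f)
    (B : ℝ) (hB : ∀ y, |f y| ≤ B) (t : ℕ) :
    Continuous (fun x : ℕ → ℝ × ℝ => ∑' k : ℕ, δ ^ k * f (x (t + k))) := by
  refine continuous_tsum (fun k => ?_) ((summable_geometric_of_lt_one h0 h1).mul_right B)
    (fun k x => ?_)
  · exact continuous_const.mul (hf.comp (continuous_apply (t + k)))
  · rw [Real.norm_eq_abs, abs_mul, abs_pow, abs_of_nonneg h0]
    exact mul_le_mul_of_nonneg_left (hB _) (pow_nonneg h0 k)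

lemma tsum_shift (δ : ℝ) (a : ℕ → ℝ) (t : ℕ) (h : Summable fun k => δ ^ k * a (t + k)) :
    ∑' k : ℕ, δ ^ k * a (t + k) = a t + δ * ∑' k : ℕ, δ ^ k * a (t + 1 + k) := by
  rw [Summable.tsum_eq_zero_add h]
  simp only [pow_zero, one_mul, Nat.add_zero]
  congr 1
  rw [← tsum_mul_left]
  refine tsum_congr (fun k => ?_)
  rw [show t + (k + 1) = t + 1 + k by omega]
  ring

lemma summable_shift (δ : ℝ) (hδ : 0 < δ) (p : ℕ → ℝ) (h : Summable fun t => δ ^ t * p t)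
    (t : ℕ) : Summable (fun k => δ ^ k * p (t + k)) := by
  have h1 : Summable (fun k => δ ^ (k + t) * p (k + t)) := (summable_nat_add_iff t).2 h
  refine (h1.mul_left ((δ ^ t)⁻¹)).congr (fun k => ?_)
  have hδt : (δ : ℝ) ^ t ≠ 0 := pow_ne_zero t hδ.ne'
  rw [show t + k = k + t from add_comm t k, pow_add]
  field_simp


/-- An optimal contract exists. -/
theorem exists_optimal_contract
    (δ : ℝ) (hδ : δ ∈ Set.Ioo (0 : ℝ) 1) (π w : ℝ → ℝ)
    (hπc : ContinuousOn π (Set.Icc 0 1)) (hwc : ContinuousOn w (Set.Icc 0 1))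
    (hπm : StrictMonoOn π (Set.Icc 0 1)) (hwa : StrictAntiOn w (Set.Icc 0 1))
    (hGm : StrictMonoOn (fun x => π x + w x) (Set.Icc 0 1)) :
    ∃ s p : ℕ → ℝ, Optimal δ π w s p := by
  obtain ⟨hδ0, hδ1⟩ := hδ
  have h1δ : (0:ℝ) < 1 - δ := by linarith
  have h01 : (0:ℝ) ≤ 1 := zero_le_one
  have hπ01 : π 0 < π 1 :=
    hπm (left_mem_Icc.2 h01) (right_mem_Icc.2 h01) zero_lt_one
  set M : ℝ := (π 1 - π 0) / (1 - δ) with hMdef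
  have hM0 : 0 ≤ M := div_nonneg (by linarith) h1δ.le
  -- clamps
  set cl : ℝ → ℝ := fun x => max 0 (min x 1) with hcl
  set clM : ℝ → ℝ := fun y => max 0 (min y M) with hclM
  have clmem : ∀ x, cl x ∈ Icc (0:ℝ) 1 :=
    fun x => ⟨le_max_left _ _, max_le h01 (min_le_right _ _)⟩
  have clid : ∀ x ∈ Icc (0:ℝ) 1, cl x = x := by
    intro x hx; simp only [hcl]; rw [min_eq_left hx.2, max_eq_right hx.1]
  have clMmem : ∀ y, clM y ∈ Icc (0:ℝ) M :=
    fun y => ⟨le_max_left _ _, max_le hM0 (min_le_right _ _)⟩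
  have clMid : ∀ y ∈ Icc (0:ℝ) M, clM y = y := by
    intro y hy; simp only [hclM]; rw [min_eq_left hy.2, max_eq_right hy.1]
  have hclc : Continuous cl := continuous_const.max (continuous_id.min continuous_const)
  have hclMc : Continuous clM := continuous_const.max (continuous_id.min continuous_const)
  have hπcc : Continuous (π ∘ cl) := hπc.comp_continuous hclc clmem
  have hwcc : Continuous (w ∘ cl) := hwc.comp_continuous hclc clmem
  obtain ⟨B1, hB1⟩ := isCompact_Icc.exists_bound_of_continuousOn hπc
  obtain ⟨B2, hB2⟩ := isCompact_Icc.exists_bound_of_continuousOn hwc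
  have hB1' : ∀ x ∈ Icc (0:ℝ) 1, |π x| ≤ B1 := fun x hx => by
    have := hB1 x hx; rwa [Real.norm_eq_abs] at this
  have hB2' : ∀ x ∈ Icc (0:ℝ) 1, |w x| ≤ B2 := fun x hx => by
    have := hB2 x hx; rwa [Real.norm_eq_abs] at this
  have hclMb : ∀ y, |clM y| ≤ M := fun y => by
    have h := clMmem y; rw [abs_of_nonneg h.1]; exact h.2
  -- the clamped functionals
  set f1 : ℝ × ℝ → ℝ := fun y => π (cl y.1) - clM y.2 with hf1
  set f2 : ℝ × ℝ → ℝ := fun y => w (cl y.1) + clM y.2 with hf2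
  have hf1c : Continuous f1 := (hπcc.comp continuous_fst).sub (hclMc.comp continuous_snd)
  have hf2c : Continuous f2 := (hwcc.comp continuous_fst).add (hclMc.comp continuous_snd)
  have hf1b : ∀ y, |f1 y| ≤ B1 + M := fun y =>
    (abs_sub _ _).trans (add_le_add (hB1' _ (clmem _)) (hclMb _))
  have hf2b : ∀ y, |f2 y| ≤ B2 + M := fun y =>
    (abs_add_le _ _).trans (add_le_add (hB2' _ (clmem _)) (hclMb _))
  set F : ℕ → (ℕ → ℝ × ℝ) → ℝ := fun t x => ∑' k : ℕ, δ ^ k * f1 (x (t + k)) with hF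
  set G : ℕ → (ℕ → ℝ × ℝ) → ℝ := fun t x => ∑' k : ℕ, δ ^ k * f2 (x (t + k)) with hG
  have hFc : ∀ t, Continuous (F t) := fun t => cont_series δ hδ0.le hδ1 f1 hf1c _ hf1b t
  have hGc : ∀ t, Continuous (G t) := fun t => cont_series δ hδ0.le hδ1 f2 hf2c _ hf2b t
  -- the feasible set
  set K : Set (ℕ → ℝ × ℝ) := Set.pi univ (fun _ => Icc (0:ℝ) 1 ×ˢ Icc (0:ℝ) M) with hKdef
  set A : Set (ℕ → ℝ × ℝ) := K ∩
    ({x | (x 0).1 = 0} ∩ {x | ∀ n, (x n).1 ≤ (x (n+1)).1} ∩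
      {x | ∀ t, π (cl (x t).1) / (1 - δ) ≤ F t x} ∩
      {x | ∀ t, w (cl (x t).1) / (1 - δ) ≤ G (t+1) x}) with hAdef
  have hKc : IsCompact K := isCompact_univ_pi (fun _ => isCompact_Icc.prod isCompact_Icc)
  have hAc : IsCompact A := by
    refine hKc.inter_right ?_
    refine IsClosed.inter (IsClosed.inter (IsClosed.inter ?_ ?_) ?_) ?_
    · exact isClosed_eq (continuous_apply 0).fst continuous_const
    · have : {x : ℕ → ℝ × ℝ | ∀ n, (x n).1 ≤ (x (n+1)).1} =
          ⋂ n, {x | (x n).1 ≤ (x (n+1)).1} := by ext x; simp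
      rw [this]
      exact isClosed_iInter fun n =>
        isClosed_le (continuous_apply n).fst (continuous_apply (n+1)).fst
    · have : {x : ℕ → ℝ × ℝ | ∀ t, π (cl (x t).1) / (1 - δ) ≤ F t x} =
          ⋂ t, {x | π (cl (x t).1) / (1 - δ) ≤ F t x} := by ext x; simp
      rw [this]
      exact isClosed_iInter fun t =>
        isClosed_le ((hπcc.comp (continuous_apply t).fst).div_const _) (hFc t)
    · have : {x : ℕ → ℝ × ℝ | ∀ t, w (cl (x t).1) / (1 - δ) ≤ G (t+1) x} =
          ⋂ t, {x | w (cl (x t).1) / (1 - δ) ≤ G (t+1) x} := by ext x; simp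
      rw [this]
      exact isClosed_iInter fun t =>
        isClosed_le ((hwcc.comp (continuous_apply t).fst).div_const _) (hGc (t+1))
  -- key translation between F/G and PiVal/WVal
  have keyF : ∀ (s p : ℕ → ℝ), (∀ n, s n ∈ Icc (0:ℝ) 1) → (∀ n, p n ∈ Icc (0:ℝ) M) →
      ∀ t, F t (fun n => (s n, p n)) = PiVal δ π s p t := by
    intro s p hs hp t
    refine tsum_congr (fun k => ?_)
    simp only [hf1]
    rw [clid _ (hs _), clMid _ (hp _)]
  have keyG : ∀ (s p : ℕ → ℝ), (∀ n, s n ∈ Icc (0:ℝ) 1) → (∀ n, p n ∈ Icc (0:ℝ) M) →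
      ∀ t, G t (fun n => (s n, p n)) = WVal δ w s p t := by
    intro s p hs hp t
    refine tsum_congr (fun k => ?_)
    simp only [hf2]
    rw [clid _ (hs _), clMid _ (hp _)]
  have cl0 : cl 0 = 0 := clid 0 ⟨le_refl _, h01⟩
  have clM0 : clM 0 = 0 := clMid 0 ⟨le_refl _, hM0⟩
  -- the trivial contract is feasible
  have htriv : (fun _ : ℕ => ((0:ℝ), (0:ℝ))) ∈ A := by
    have hFt : ∀ t, F t (fun _ : ℕ => ((0:ℝ), (0:ℝ))) = π 0 / (1 - δ) := by
      intro t
      have : ∀ k : ℕ, δ ^ k * f1 ((0:ℝ), (0:ℝ)) = δ ^ k * π 0 := by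
        intro k; simp only [hf1]; rw [cl0, clM0]; ring
      calc F t (fun _ : ℕ => ((0:ℝ), (0:ℝ))) = ∑' k : ℕ, δ ^ k * π 0 := tsum_congr this
        _ = π 0 / (1 - δ) := tsum_geom_mul δ _ hδ0.le hδ1
    have hGt : ∀ t, G t (fun _ : ℕ => ((0:ℝ), (0:ℝ))) = w 0 / (1 - δ) := by
      intro t
      have : ∀ k : ℕ, δ ^ k * f2 ((0:ℝ), (0:ℝ)) = δ ^ k * w 0 := by
        intro k; simp only [hf2]; rw [cl0, clM0]; ring
      calc G t (fun _ : ℕ => ((0:ℝ), (0:ℝ))) = ∑' k : ℕ, δ ^ k * w 0 := tsum_congr this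
        _ = w 0 / (1 - δ) := tsum_geom_mul δ _ hδ0.le hδ1
    refine ⟨?_, ⟨⟨rfl, fun n => le_refl _⟩, ?_⟩, ?_⟩
    · intro n _
      exact ⟨⟨le_refl _, h01⟩, ⟨le_refl _, hM0⟩⟩
    · intro t; rw [cl0, hFt t]
    · intro t; rw [cl0, hGt (t+1)]
  -- maximize
  obtain ⟨xs, hxsA, hmax⟩ := hAc.exists_isMaxOn ⟨_, htriv⟩ (hFc 0).continuousOn
  obtain ⟨hxK, ⟨⟨hx0, hxmono⟩, hxP⟩, hxE⟩ := hxsA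
  set ss : ℕ → ℝ := fun n => (xs n).1 with hss
  set ps : ℕ → ℝ := fun n => (xs n).2 with hps
  have hxeq : (fun n => (ss n, ps n)) = xs := rfl
  have hssIcc : ∀ n, ss n ∈ Icc (0:ℝ) 1 := fun n => (hxK n (mem_univ n)).1
  have hpsIcc : ∀ n, ps n ∈ Icc (0:ℝ) M := fun n => (hxK n (mem_univ n)).2
  refine ⟨ss, ps, ⟨⟨⟨hssIcc, hx0, ?_⟩, monotone_nat_of_le_succ hxmono, fun t => (hpsIcc t).1,
      fun t => ?_, fun t => ?_⟩, ?_⟩⟩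
  · exact summable_geom_bound δ hδ0.le hδ1 ps M
      (fun t => by rw [abs_of_nonneg (hpsIcc t).1]; exact (hpsIcc t).2)
  · -- P-IC for the maximizer
    have := hxP t
    rw [clid _ (hssIcc t)] at this
    rw [← keyF ss ps hssIcc hpsIcc t, hxeq]
    exact this
  · -- E-IC for the maximizer
    have := hxE t
    rw [clid _ (hssIcc t)] at this
    rw [← keyG ss ps hssIcc hpsIcc (t+1), hxeq]
    exact this
  · -- optimality
    intro s' p' himp
    obtain ⟨⟨hsIcc, hs0, hsum⟩, hmono, hp0, hPIC, hEIC⟩ := himp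
    have hB1s : ∀ n, |π (s' n)| ≤ B1 := fun n => hB1' _ (hsIcc n)
    have Sπ : ∀ t, Summable (fun k => δ ^ k * π (s' (t + k))) := fun t =>
      summable_geom_bound δ hδ0.le hδ1 _ B1 (fun k => hB1s _)
    have Sp : ∀ t, Summable (fun k => δ ^ k * p' (t + k)) := summable_shift δ hδ0 p' hsum
    have Sa : ∀ t, Summable (fun k => δ ^ k * (π (s' (t + k)) - p' (t + k))) := fun t =>
      ((Sπ t).sub (Sp t)).congr (fun k => (mul_sub _ _ _).symm)
    have hub : ∀ t, PiVal δ π s' p' t ≤ π 1 / (1 - δ) := by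
      intro t
      have h1 : ∀ k : ℕ, δ ^ k * (π (s' (t + k)) - p' (t + k)) ≤ δ ^ k * π 1 := by
        intro k
        have hπle : π (s' (t + k)) ≤ π 1 :=
          hπm.monotoneOn (hsIcc _) (right_mem_Icc.2 h01) (hsIcc _).2
        have := hp0 (t + k)
        exact mul_le_mul_of_nonneg_left (by linarith) (pow_nonneg hδ0.le k)
      calc PiVal δ π s' p' t ≤ ∑' k : ℕ, δ ^ k * π 1 :=
            Summable.tsum_le_tsum h1 (Sa t) ((summable_geometric_of_lt_one hδ0.le hδ1).mul_right _)
        _ = π 1 / (1 - δ) := tsum_geom_mul δ _ hδ0.le hδ1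
    have hlb : ∀ t, π 0 / (1 - δ) ≤ PiVal δ π s' p' t := by
      intro t
      refine le_trans ?_ (hPIC t)
      have h : π 0 ≤ π (s' t) := hπm.monotoneOn (left_mem_Icc.2 h01) (hsIcc t) (hsIcc t).1
      gcongr
    have hrec : ∀ t, PiVal δ π s' p' t = (π (s' t) - p' t) + δ * PiVal δ π s' p' (t + 1) := by
      intro t
      exact tsum_shift δ (fun n => π (s' n) - p' n) t (Sa t)
    have hpM : ∀ t, p' t ≤ M := by
      intro t
      have h1 := hub (t + 1)
      have h2 := hlb t
      have h3 := hrec t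
      have h4 : δ * PiVal δ π s' p' (t + 1) ≤ δ * (π 1 / (1 - δ)) :=
        mul_le_mul_of_nonneg_left h1 hδ0.le
      have h5 : π (s' t) ≤ π 1 :=
        hπm.monotoneOn (hsIcc t) (right_mem_Icc.2 h01) (hsIcc t).2
      have h6 : π 1 + δ * (π 1 / (1 - δ)) - π 0 / (1 - δ) = M := by
        rw [hMdef]; field_simp; ring
      linarith
    have hpIcc : ∀ n, p' n ∈ Icc (0:ℝ) M := fun n => ⟨hp0 n, hpM n⟩
    have hx'A : (fun n => (s' n, p' n)) ∈ A := by
      refine ⟨?_, ⟨⟨hs0, fun n => hmono (Nat.le_succ n)⟩, ?_⟩, ?_⟩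
      · intro n _
        exact ⟨hsIcc n, hpIcc n⟩
      · intro t
        rw [clid _ (hsIcc t), keyF s' p' hsIcc hpIcc t]
        exact hPIC t
      · intro t
        rw [clid _ (hsIcc t), keyG s' p' hsIcc hpIcc (t+1)]
        exact hEIC t
    have hle : F 0 (fun n => (s' n, p' n)) ≤ F 0 xs := hmax hx'A
    rw [keyF s' p' hsIcc hpIcc 0] at hle
    rw [← keyF ss ps hssIcc hpsIcc 0, hxeq]
    exact hle
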